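/- Let X₀, X_j, Π, V be nonnegative random variables on a probability space (Ω, 𝓕, P) such that the pair (Π, V) is independent of the pair (X₀, X_j). Let ξ > 0, u > 0, assume E[Π^ξ] < ∞, and set X_k := Π · X_j + V. Then P(min{X₀, X_j, X_k} > u) ≤ P(min{X₀, X_j} > u) · P(V > u/2) + 2^ξ · u^{−ξ} · E[Π^ξ] · E[X_j^ξ · 1{X₀ > u, X_j > u}]. -/

import Mathlib

open MeasureTheory ProbabilityTheory
open scoped ENNReal

/-- The splitting inequality from Appendix B of the paper: if `(Π, V)` is independent of
`(X₀, X_j)` and `X_k = Π X_j + V`, then the triple exceedance probability is bounded by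
`P(min{X₀,X_j} > u) P(V > u/2) + 2^ξ u^{-ξ} E[Π^ξ] E[X_j^ξ 1{X₀>u, X_j>u}]`. -/
theorem stmt3 {Ω : Type*} [MeasurableSpace Ω] (P : Measure Ω) [IsProbabilityMeasure P]
    (X₀ Xj Pi V : Ω → ℝ)
    (hX₀nn : ∀ ω, 0 ≤ X₀ ω) (hXjnn : ∀ ω, 0 ≤ Xj ω)
    (hPinn : ∀ ω, 0 ≤ Pi ω) (hVnn : ∀ ω, 0 ≤ V ω)
    (hX₀m : Measurable X₀) (hXjm : Measurable Xj)
    (hPim : Measurable Pi) (hVm : Measurable V)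
    (hindep : IndepFun (fun ω => (Pi ω, V ω)) (fun ω => (X₀ ω, Xj ω)) P)
    (ξ : ℝ) (hξ : 0 < ξ) (u : ℝ) (hu : 0 < u)
    (hPimom : ∫⁻ ω, ENNReal.ofReal (Pi ω ^ ξ) ∂P < ⊤)
    (Xk : Ω → ℝ) (hXk : Xk = fun ω => Pi ω * Xj ω + V ω) :
    P {ω | u < min (X₀ ω) (min (Xj ω) (Xk ω))}
      ≤ P {ω | u < min (X₀ ω) (Xj ω)} * P {ω | u / 2 < V ω}
        + ENNReal.ofReal ((2 : ℝ) ^ ξ * u ^ (-ξ)) * (∫⁻ ω, ENNReal.ofReal (Pi ω ^ ξ) ∂P)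
          * ∫⁻ ω, (if X₀ ω > u ∧ Xj ω > u then ENNReal.ofReal (Xj ω ^ ξ) else 0) ∂P := by
  subst hXk
  set A : Set Ω := {ω | u < min (X₀ ω) (Xj ω)} with hA
  set B : Set Ω := {ω | u / 2 < V ω} with hB
  set C : Set Ω := {ω | u / 2 < Pi ω * Xj ω} with hC
  have hAm : MeasurableSet A := measurableSet_lt measurable_const (hX₀m.min hXjm)
  have hCm : MeasurableSet C := measurableSet_lt measurable_const (hPim.mul hXjm)
  -- Step 1: inclusion
  have hsub : {ω | u < min (X₀ ω) (min (Xj ω) (Pi ω * Xj ω + V ω))} ⊆ (A ∩ B) ∪ (A ∩ C) := by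
    intro ω hω
    simp only [Set.mem_setOf_eq, lt_min_iff] at hω
    obtain ⟨h0, h1, h2⟩ := hω
    have hA' : ω ∈ A := by
      simp only [hA, Set.mem_setOf_eq, lt_min_iff]; exact ⟨h0, h1⟩
    by_cases hv : u / 2 < V ω
    · exact Or.inl ⟨hA', hv⟩
    · refine Or.inr ⟨hA', ?_⟩
      push_neg at hv
      simp only [hC, Set.mem_setOf_eq]
      linarith
  have h1 : P {ω | u < min (X₀ ω) (min (Xj ω) (Pi ω * Xj ω + V ω))}
      ≤ P (A ∩ B) + P (A ∩ C) :=
    (measure_mono hsub).trans (measure_union_le _ _)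
  -- Step 2: independence for A ∩ B
  have hAB : P (A ∩ B) = P A * P B := by
    have := hindep.measure_inter_preimage_eq_mul {p : ℝ × ℝ | u / 2 < p.2}
      {p : ℝ × ℝ | u < min p.1 p.2}
      (measurableSet_lt measurable_const measurable_snd)
      (measurableSet_lt measurable_const (measurable_fst.min measurable_snd))
    have heq : (fun ω => (Pi ω, V ω)) ⁻¹' {p : ℝ × ℝ | u / 2 < p.2} = B := rfl
    have heq2 : (fun ω => (X₀ ω, Xj ω)) ⁻¹' {p : ℝ × ℝ | u < min p.1 p.2} = A := rfl
    rw [heq, heq2] at this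
    rw [Set.inter_comm, this, mul_comm]
  -- Step 3: Chebyshev-type bound for A ∩ C
  set c : ℝ≥0∞ := ENNReal.ofReal ((2 : ℝ) ^ ξ * u ^ (-ξ)) with hc
  set f : Ω → ℝ≥0∞ := fun ω => ENNReal.ofReal (Pi ω ^ ξ) with hf
  set g : Ω → ℝ≥0∞ := fun ω => if X₀ ω > u ∧ Xj ω > u then ENNReal.ofReal (Xj ω ^ ξ) else 0
    with hg
  have hfm : Measurable f := ENNReal.measurable_ofReal.comp ((Real.continuous_rpow_const hξ.le).measurable.comp hPim)
  have hgm : Measurable g := by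
    apply Measurable.ite
    · exact (measurableSet_lt measurable_const hX₀m).inter (measurableSet_lt measurable_const hXjm)
    · exact ENNReal.measurable_ofReal.comp ((Real.continuous_rpow_const hξ.le).measurable.comp hXjm)
    · exact measurable_const
  have hpoint : ∀ ω, (A ∩ C).indicator (fun _ => (1 : ℝ≥0∞)) ω ≤ c * f ω * g ω := by
    intro ω
    by_cases hω : ω ∈ A ∩ C
    · rw [Set.indicator_of_mem hω]
      obtain ⟨hωA, hωC⟩ := hω
      simp only [hA, Set.mem_setOf_eq, lt_min_iff] at hωA
      simp only [hC, Set.mem_setOf_eq] at hωC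
      have hgω : g ω = ENNReal.ofReal (Xj ω ^ ξ) := by
        simp only [hg, if_pos (And.intro hωA.1 hωA.2)]
      rw [hgω, hc, hf]
      have hk0 : (0 : ℝ) ≤ (2 : ℝ) ^ ξ * u ^ (-ξ) :=
        mul_nonneg (Real.rpow_nonneg (by norm_num) _) (Real.rpow_nonneg hu.le _)
      rw [← ENNReal.ofReal_mul hk0,
        ← ENNReal.ofReal_mul (mul_nonneg hk0 (Real.rpow_nonneg (hPinn ω) _))]
      rw [show (1 : ℝ≥0∞) = ENNReal.ofReal 1 by simp]
      apply ENNReal.ofReal_le_ofReal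
      have hu2 : (0 : ℝ) < u / 2 := by linarith
      have hmono : (u / 2) ^ ξ ≤ Pi ω ^ ξ * Xj ω ^ ξ := by
        rw [← Real.mul_rpow (hPinn ω) (hXjnn ω)]
        exact Real.rpow_le_rpow hu2.le hωC.le hξ.le
      have hone : (2 : ℝ) ^ ξ * u ^ (-ξ) * (u / 2) ^ ξ = 1 := by
        have h2 : (2 : ℝ) ^ ξ * (u / 2) ^ ξ = u ^ ξ := by
          rw [← Real.mul_rpow (by norm_num) hu2.le, show (2 : ℝ) * (u / 2) = u by ring]
        have hup : (0 : ℝ) < u ^ ξ := Real.rpow_pos_of_pos hu _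
        rw [Real.rpow_neg hu.le, mul_comm ((2 : ℝ) ^ ξ), mul_assoc, h2,
          inv_mul_cancel₀ hup.ne']
      have hknn : (0 : ℝ) ≤ (2 : ℝ) ^ ξ * u ^ (-ξ) := by positivity
      calc (1 : ℝ) = (2 : ℝ) ^ ξ * u ^ (-ξ) * (u / 2) ^ ξ := hone.symm
        _ ≤ (2 : ℝ) ^ ξ * u ^ (-ξ) * (Pi ω ^ ξ * Xj ω ^ ξ) :=
            mul_le_mul_of_nonneg_left hmono hknn
        _ = (2 : ℝ) ^ ξ * u ^ (-ξ) * Pi ω ^ ξ * Xj ω ^ ξ := by ring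
    · rw [Set.indicator_of_notMem hω]; exact zero_le
  have hAC : P (A ∩ C) ≤ c * (∫⁻ ω, f ω ∂P) * ∫⁻ ω, g ω ∂P := by
    have hiff : P (A ∩ C) = ∫⁻ ω, (A ∩ C).indicator (fun _ => (1 : ℝ≥0∞)) ω ∂P := by
      rw [lintegral_indicator_const (hAm.inter hCm), one_mul]
    rw [hiff]
    calc ∫⁻ ω, (A ∩ C).indicator (fun _ => (1 : ℝ≥0∞)) ω ∂P
        ≤ ∫⁻ ω, c * f ω * g ω ∂P := lintegral_mono hpoint
      _ = c * ∫⁻ ω, f ω * g ω ∂P := by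
          simp_rw [mul_assoc]; exact lintegral_const_mul c (hfm.mul hgm)
      _ = c * ((∫⁻ ω, f ω ∂P) * ∫⁻ ω, g ω ∂P) := by
          congr 1
          have hφ : Measurable fun p : ℝ × ℝ => ENNReal.ofReal (p.1 ^ ξ) :=
            ENNReal.measurable_ofReal.comp ((Real.continuous_rpow_const hξ.le).measurable.comp measurable_fst)
          have hψ : Measurable fun p : ℝ × ℝ =>
              if p.1 > u ∧ p.2 > u then ENNReal.ofReal (p.2 ^ ξ) else 0 := by
            apply Measurable.ite
            · exact (measurableSet_lt measurable_const measurable_fst).inter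
                (measurableSet_lt measurable_const measurable_snd)
            · exact ENNReal.measurable_ofReal.comp ((Real.continuous_rpow_const hξ.le).measurable.comp measurable_snd)
            · exact measurable_const
          exact lintegral_mul_eq_lintegral_mul_lintegral_of_indepFun hfm hgm
            (hindep.comp hφ hψ)
      _ = c * (∫⁻ ω, f ω ∂P) * ∫⁻ ω, g ω ∂P := by rw [mul_assoc]
  calc P {ω | u < min (X₀ ω) (min (Xj ω) (Pi ω * Xj ω + V ω))}
      ≤ P (A ∩ B) + P (A ∩ C) := h1
    _ ≤ P A * P B + c * (∫⁻ ω, f ω ∂P) * ∫⁻ ω, g ω ∂P := by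
        rw [hAB]; exact add_le_add_right hAC _
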